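/- Let H ∈ (0,1) and let α satisfy 0 < α < min{1/2, H}. Then there exists a constant κ > 0 depending only on α and H such that for all real numbers t₁, t₂ with t₂ > 2t₁ > 0 and every square-integrable function g₁ : [0, t₁] → ℝⁿ, the function g₂ : [0,∞) → [0,∞) defined by g₂(t) = ∫₀^{t₁} t^{1/2−H} (t₂ − s)^{H−1/2} / (t + t₂ − s) · ‖g₁(s)‖ ds satisfies ‖g₂‖_α ≤ κ (t₂/t₁)^{α − 1/2} ‖g₁‖_α, where g₁ is regarded as a function on [0,∞) extended by zero. -/

import Mathlib

open MeasureTheory Set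
open scoped ENNReal

/-- The squared weighted norm `‖g‖_α² = ∫₀^∞ (1+t)^{2α} ‖g(t)‖² dt`, as an extended
nonnegative real. -/
noncomputable def alphaNormSq {E : Type*} [NormedAddCommGroup E] (α : ℝ) (g : ℝ → E) :
    ℝ≥0∞ :=
  ∫⁻ t in Set.Ioi (0 : ℝ), ENNReal.ofReal ((1 + t) ^ (2 * α) * ‖g t‖ ^ 2)

set_option maxHeartbeats 1000000 in
/-- Proposition 4.6: for `0 < α < min{1/2, H}` there is `κ > 0` such that for all
`t₂ > 2t₁ > 0` and every square-integrable `g₁ : [0,t₁] → ℝⁿ` (extended by zero),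
the function `g₂(t) = ∫₀^{t₁} t^{1/2-H} (t₂-s)^{H-1/2} / (t+t₂-s) ‖g₁(s)‖ ds`
satisfies `‖g₂‖_α ≤ κ (t₂/t₁)^{α-1/2} ‖g₁‖_α`. -/
theorem stmt12 (n : ℕ) (H α : ℝ) (hH : H ∈ Set.Ioo (0 : ℝ) 1)
    (hα : 0 < α) (hα' : α < min (1 / 2) H) :
    ∃ κ : ℝ, 0 < κ ∧ ∀ t₁ t₂ : ℝ, 0 < t₁ → 2 * t₁ < t₂ →
      ∀ g₁ : ℝ → EuclideanSpace ℝ (Fin n),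
        MemLp g₁ 2 (volume.restrict (Set.Icc 0 t₁)) →
        (∀ s : ℝ, s ∉ Set.Icc (0 : ℝ) t₁ → g₁ s = 0) →
        (alphaNormSq α fun t : ℝ =>
            ∫ s in (0 : ℝ)..t₁,
              (t ^ ((1 : ℝ) / 2 - H) * (t₂ - s) ^ (H - 1 / 2) / (t + t₂ - s)) * ‖g₁ s‖) ^
            ((1 : ℝ) / 2) ≤
          ENNReal.ofReal (κ * (t₂ / t₁) ^ (α - 1 / 2)) * (alphaNormSq α g₁) ^ ((1 : ℝ) / 2) := by
  obtain ⟨hH0, hH1⟩ := hH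
  have hα2 : α < 1 / 2 := lt_of_lt_of_le hα' (min_le_left _ _)
  have hαH : α < H := lt_of_lt_of_le hα' (min_le_right _ _)
  have h2H1 : (0 : ℝ) < 2 - 2 * H := by linarith
  have h2HA : (0 : ℝ) < 2 * H - 2 * α := by linarith
  have h12A : (0 : ℝ) < 1 - 2 * α := by linarith
  set C₁ : ℝ := 1 / (2 - 2 * H) + 1 / (2 * H - 2 * α) with hC₁def
  have hC₁ : 0 < C₁ := by positivity
  set c₂ : ℝ := 1 + 2 ^ (1 - 2 * α) / (1 - 2 * α) with hc₂def
  have hc₂1 : (1 : ℝ) ≤ c₂ := by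
    rw [hc₂def]
    have : (0:ℝ) < 2 ^ (1 - 2 * α) / (1 - 2 * α) := by positivity
    linarith
  have hc₂ : 0 < c₂ := lt_of_lt_of_le one_pos hc₂1
  refine ⟨Real.sqrt (8 * C₁ * c₂), Real.sqrt_pos.2 (by positivity), ?_⟩
  intro t₁ t₂ ht₁ ht₂ g₁ hmem hzero
  set κ : ℝ := Real.sqrt (8 * C₁ * c₂) with hκdef
  have hκ0 : 0 ≤ κ := Real.sqrt_nonneg _
  have hκ2 : κ ^ 2 = 8 * C₁ * c₂ := Real.sq_sqrt (by positivity)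
  set T : ℝ := t₂ / 2 with hTdef
  have hT0 : 0 < T := by simp only [hTdef]; linarith
  have ht₁T : t₁ < T := by simp only [hTdef]; linarith
  have ht₂0 : 0 < t₂ := by linarith
  set K : ℝ := max 1 (T ^ (-(2 * α))) with hKdef
  have hK1 : (1 : ℝ) ≤ K := le_max_left _ _
  have hK0 : (0 : ℝ) ≤ K := le_trans zero_le_one hK1
  -- integrability of ‖g₁‖ on (0, t₁]
  have hgi : IntegrableOn (fun s => ‖g₁ s‖) (Ioc 0 t₁) volume := by
    have h1 : IntegrableOn g₁ (Icc 0 t₁) volume := hmem.integrable (by norm_num)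
    have h2 : IntegrableOn (fun s => ‖g₁ s‖) (Icc 0 t₁) volume := h1.norm
    exact h2.mono_set Ioc_subset_Icc_self
  have hgiI : IntervalIntegrable (fun s => ‖g₁ s‖) volume 0 t₁ :=
    (intervalIntegrable_iff_integrableOn_Ioc_of_le ht₁.le).2 hgi
  set B : ℝ := ∫ s in (0 : ℝ)..t₁, ‖g₁ s‖ with hBdef
  have hB0 : 0 ≤ B :=
    intervalIntegral.integral_nonneg ht₁.le fun u _ => norm_nonneg _
  set f2 : ℝ → ℝ := fun t : ℝ =>
    ∫ s in (0 : ℝ)..t₁,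
      (t ^ ((1 : ℝ) / 2 - H) * (t₂ - s) ^ (H - 1 / 2) / (t + t₂ - s)) * ‖g₁ s‖ with hf2def
  -- nonnegativity of f2
  have hf2nn : ∀ t : ℝ, 0 < t → 0 ≤ f2 t := by
    intro t ht
    apply intervalIntegral.integral_nonneg ht₁.le
    intro s hs
    have hs2 : s ≤ t₁ := hs.2
    have h1 : (0:ℝ) ≤ t₂ - s := by linarith
    have h2 : (0:ℝ) ≤ t + t₂ - s := by linarith
    have := Real.rpow_nonneg ht.le ((1 : ℝ) / 2 - H)
    have := Real.rpow_nonneg h1 (H - 1 / 2)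
    positivity
  -- pointwise bound on f2
  have hf2b : ∀ t : ℝ, 0 < t →
      f2 t ≤ 2 * T ^ (H - 1 / 2) * t ^ ((1 : ℝ) / 2 - H) / (t + T) * B := by
    intro t ht
    have hden : 0 < t + T := by linarith
    set M : ℝ := 2 * T ^ (H - 1 / 2) * t ^ ((1 : ℝ) / 2 - H) / (t + T) with hMdef
    have hM0 : 0 ≤ M := by
      have := Real.rpow_nonneg hT0.le (H - 1 / 2)
      have := Real.rpow_nonneg ht.le ((1 : ℝ) / 2 - H)
      positivity
    have hconst : IntervalIntegrable (fun s => M * ‖g₁ s‖) volume 0 t₁ := hgiI.const_mul M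
    have hptw : ∀ s ∈ Icc (0 : ℝ) t₁,
        (t ^ ((1 : ℝ) / 2 - H) * (t₂ - s) ^ (H - 1 / 2) / (t + t₂ - s)) * ‖g₁ s‖
          ≤ M * ‖g₁ s‖ := by
      intro s hs
      obtain ⟨hs0, hst₁⟩ := hs
      have h1 : T ≤ t₂ - s := by simp only [hTdef]; linarith
      have h2 : (t₂ - s) ^ (H - 1 / 2) ≤ 2 * T ^ (H - 1 / 2) := by
        have hTnn := Real.rpow_nonneg hT0.le (H - 1 / 2)
        rcases le_or_gt (1 / 2 : ℝ) H with hc | hc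
        · have hb1 : (t₂ - s) ^ (H - 1 / 2) ≤ t₂ ^ (H - 1 / 2) :=
            Real.rpow_le_rpow (by linarith) (by linarith) (by linarith)
          have ht₂T : t₂ = 2 * T := by simp only [hTdef]; ring
          have hb2 : (2 * T) ^ (H - 1 / 2) = 2 ^ (H - 1 / 2) * T ^ (H - 1 / 2) :=
            Real.mul_rpow (by norm_num) hT0.le
          have hb3 : (2 : ℝ) ^ (H - 1 / 2) ≤ 2 := by
            calc (2 : ℝ) ^ (H - 1 / 2) ≤ 2 ^ (1 : ℝ) :=
                  Real.rpow_le_rpow_of_exponent_le one_le_two (by linarith)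
              _ = 2 := Real.rpow_one 2
          calc (t₂ - s) ^ (H - 1 / 2) ≤ t₂ ^ (H - 1 / 2) := hb1
            _ = 2 ^ (H - 1 / 2) * T ^ (H - 1 / 2) := by rw [ht₂T, hb2]
            _ ≤ 2 * T ^ (H - 1 / 2) := mul_le_mul_of_nonneg_right hb3 hTnn
        · have hb1 : (t₂ - s) ^ (H - 1 / 2) ≤ T ^ (H - 1 / 2) :=
            Real.rpow_le_rpow_of_nonpos hT0 h1 (by linarith)
          nlinarith
      have hnum : t ^ ((1 : ℝ) / 2 - H) * (t₂ - s) ^ (H - 1 / 2)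
          ≤ t ^ ((1 : ℝ) / 2 - H) * (2 * T ^ (H - 1 / 2)) :=
        mul_le_mul_of_nonneg_left h2 (Real.rpow_nonneg ht.le _)
      have hden2 : t + T ≤ t + t₂ - s := by linarith
      have hnum0 : 0 ≤ t ^ ((1 : ℝ) / 2 - H) * (2 * T ^ (H - 1 / 2)) := by
        have := Real.rpow_nonneg hT0.le (H - 1 / 2)
        have := Real.rpow_nonneg ht.le ((1 : ℝ) / 2 - H)
        positivity
      have hdiv : t ^ ((1 : ℝ) / 2 - H) * (t₂ - s) ^ (H - 1 / 2) / (t + t₂ - s)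
          ≤ t ^ ((1 : ℝ) / 2 - H) * (2 * T ^ (H - 1 / 2)) / (t + T) :=
        div_le_div₀ hnum0 hnum hden hden2
      have heq : t ^ ((1 : ℝ) / 2 - H) * (2 * T ^ (H - 1 / 2)) / (t + T) = M := by
        rw [hMdef]; ring
      rw [heq] at hdiv
      exact mul_le_mul_of_nonneg_right hdiv (norm_nonneg _)
    have hlhsInt : IntervalIntegrable
        (fun s => (t ^ ((1 : ℝ) / 2 - H) * (t₂ - s) ^ (H - 1 / 2) / (t + t₂ - s)) * ‖g₁ s‖)
        volume 0 t₁ := by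
      rw [intervalIntegrable_iff_integrableOn_Ioc_of_le ht₁.le]
      have hmeas : AEStronglyMeasurable
          (fun s => (t ^ ((1 : ℝ) / 2 - H) * (t₂ - s) ^ (H - 1 / 2) / (t + t₂ - s)) * ‖g₁ s‖)
          (volume.restrict (Ioc 0 t₁)) := by
        apply AEStronglyMeasurable.mul
        · exact (by fun_prop :
            Measurable fun s : ℝ =>
              t ^ ((1 : ℝ) / 2 - H) * (t₂ - s) ^ (H - 1 / 2) / (t + t₂ - s)).aestronglyMeasurable
        · exact (hmem.aestronglyMeasurable.mono_measure
            (Measure.restrict_mono Ioc_subset_Icc_self le_rfl)).norm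
      apply Integrable.mono (hgi.const_mul M) hmeas
      rw [ae_restrict_iff' measurableSet_Ioc]
      refine ae_of_all _ fun s hs => ?_
      have h := hptw s (Ioc_subset_Icc_self hs)
      have hs2 : s ≤ t₁ := hs.2
      have h1 : (0:ℝ) ≤ t₂ - s := by linarith
      have h2 : (0:ℝ) ≤ t + t₂ - s := by linarith
      have hnn : 0 ≤ (t ^ ((1 : ℝ) / 2 - H) * (t₂ - s) ^ (H - 1 / 2) / (t + t₂ - s)) * ‖g₁ s‖ := by
        have := Real.rpow_nonneg ht.le ((1 : ℝ) / 2 - H)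
        have := Real.rpow_nonneg h1 (H - 1 / 2)
        positivity
      rw [Real.norm_eq_abs, Real.norm_eq_abs, abs_of_nonneg hnn,
        abs_of_nonneg (mul_nonneg hM0 (norm_nonneg _))]
      exact h
    calc f2 t ≤ ∫ s in (0 : ℝ)..t₁, M * ‖g₁ s‖ :=
          intervalIntegral.integral_mono_on ht₁.le hlhsInt hconst hptw
      _ = M * B := by rw [intervalIntegral.integral_const_mul]
  -- Step 1: bound alphaNormSq f2 by a constant times an explicit integral
  have step1 : alphaNormSq α f2 ≤ ENNReal.ofReal (4 * T ^ (2 * H - 1) * B ^ 2) *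
      ∫⁻ t in Ioi (0 : ℝ), ENNReal.ofReal ((1 + t) ^ (2 * α) * t ^ (1 - 2 * H) / (t + T) ^ 2) := by
    rw [alphaNormSq]
    have hb : ∀ t ∈ Ioi (0 : ℝ),
        ENNReal.ofReal ((1 + t) ^ (2 * α) * ‖f2 t‖ ^ 2) ≤
          ENNReal.ofReal (4 * T ^ (2 * H - 1) * B ^ 2) *
            ENNReal.ofReal ((1 + t) ^ (2 * α) * t ^ (1 - 2 * H) / (t + T) ^ 2) := by
      intro t ht
      have ht0 : (0 : ℝ) < t := ht
      have h1tnn : (0:ℝ) ≤ 1 + t := by linarith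
      rw [← ENNReal.ofReal_mul (by positivity)]
      apply ENNReal.ofReal_le_ofReal
      have h1 : ‖f2 t‖ ^ 2 ≤ (2 * T ^ (H - 1 / 2) * t ^ ((1 : ℝ) / 2 - H) / (t + T)) ^ 2 * B ^ 2 := by
        rw [Real.norm_eq_abs, sq_abs, ← mul_pow]
        exact pow_le_pow_left₀ (hf2nn t ht0) (hf2b t ht0) 2
      have h2 : (2 * T ^ (H - 1 / 2) * t ^ ((1 : ℝ) / 2 - H) / (t + T)) ^ 2
          = 4 * T ^ (2 * H - 1) * t ^ (1 - 2 * H) / (t + T) ^ 2 := by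
        rw [div_pow, mul_pow, mul_pow,
          ← Real.rpow_natCast (T ^ (H - 1 / 2)) 2, ← Real.rpow_mul hT0.le,
          ← Real.rpow_natCast (t ^ ((1 : ℝ) / 2 - H)) 2, ← Real.rpow_mul ht0.le]
        norm_num
        rw [show (H - 1 / 2) * 2 = 2 * H - 1 by ring, show (1 / 2 - H) * 2 = 1 - 2 * H by ring]
      calc (1 + t) ^ (2 * α) * ‖f2 t‖ ^ 2
          ≤ (1 + t) ^ (2 * α) *
              ((2 * T ^ (H - 1 / 2) * t ^ ((1 : ℝ) / 2 - H) / (t + T)) ^ 2 * B ^ 2) :=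
            mul_le_mul_of_nonneg_left h1 (Real.rpow_nonneg h1tnn _)
        _ = 4 * T ^ (2 * H - 1) * B ^ 2 * ((1 + t) ^ (2 * α) * t ^ (1 - 2 * H) / (t + T) ^ 2) := by
            rw [h2]; ring
    calc (∫⁻ t in Ioi (0:ℝ), ENNReal.ofReal ((1 + t) ^ (2 * α) * ‖f2 t‖ ^ 2))
        ≤ ∫⁻ t in Ioi (0:ℝ), ENNReal.ofReal (4 * T ^ (2 * H - 1) * B ^ 2) *
            ENNReal.ofReal ((1 + t) ^ (2 * α) * t ^ (1 - 2 * H) / (t + T) ^ 2) :=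
          setLIntegral_mono' measurableSet_Ioi hb
      _ = _ := lintegral_const_mul' _ _ ENNReal.ofReal_ne_top
  -- elementary lintegral computations
  have hlint1 : (∫⁻ t in Ioc (0:ℝ) T, ENNReal.ofReal (t ^ (1 - 2 * H)))
      = ENNReal.ofReal (T ^ (2 - 2 * H) / (2 - 2 * H)) := by
    have hint : IntegrableOn (fun t : ℝ => t ^ (1 - 2 * H)) (Ioc 0 T) volume :=
      (intervalIntegral.intervalIntegrable_rpow' (by linarith : (-1:ℝ) < 1 - 2 * H)).1
    rw [← ofReal_integral_eq_lintegral_ofReal hint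
      ((ae_restrict_iff' measurableSet_Ioc).2
        (ae_of_all _ fun t ht => Real.rpow_nonneg ht.1.le _))]
    congr 1
    rw [← intervalIntegral.integral_of_le hT0.le,
      integral_rpow (Or.inl (by linarith : (-1:ℝ) < 1 - 2 * H)),
      Real.zero_rpow (by linarith : (1 - 2 * H) + 1 ≠ 0),
      show (1 - 2 * H) + 1 = 2 - 2 * H by ring]
    ring
  have hlint2 : (∫⁻ t in Ioi T, ENNReal.ofReal (t ^ (2 * α - 1 - 2 * H)))
      = ENNReal.ofReal (T ^ (2 * α - 2 * H) / (2 * H - 2 * α)) := by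
    have hexp : 2 * α - 1 - 2 * H < -1 := by linarith
    rw [← ofReal_integral_eq_lintegral_ofReal (integrableOn_Ioi_rpow_of_lt hexp hT0)
      ((ae_restrict_iff' measurableSet_Ioi).2
        (ae_of_all _ fun t ht => Real.rpow_nonneg (hT0.trans ht).le _))]
    congr 1
    rw [integral_Ioi_rpow_of_lt hexp hT0,
      show (2 * α - 1 - 2 * H) + 1 = 2 * α - 2 * H by ring]
    rw [show (2 * H - 2 * α) = -(2 * α - 2 * H) by ring, div_neg, neg_div]
  -- piece 1 : integral over (0, T]
  have hp1 : (∫⁻ t in Ioc (0:ℝ) T,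
        ENNReal.ofReal ((1 + t) ^ (2 * α) * t ^ (1 - 2 * H) / (t + T) ^ 2))
      ≤ ENNReal.ofReal (2 ^ (2 * α) * K * T ^ (2 * α) / T ^ 2 * (T ^ (2 - 2 * H) / (2 - 2 * H))) := by
    have hcnn : (0:ℝ) ≤ 2 ^ (2 * α) * K * T ^ (2 * α) / T ^ 2 := by positivity
    have hb : ∀ t ∈ Ioc (0:ℝ) T,
        ENNReal.ofReal ((1 + t) ^ (2 * α) * t ^ (1 - 2 * H) / (t + T) ^ 2)
          ≤ ENNReal.ofReal (2 ^ (2 * α) * K * T ^ (2 * α) / T ^ 2 * t ^ (1 - 2 * H)) := by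
      intro t ht
      obtain ⟨ht0, htT⟩ := ht
      apply ENNReal.ofReal_le_ofReal
      have h1 : (1 + t) ^ (2 * α) ≤ 2 ^ (2 * α) * K * T ^ (2 * α) := by
        rcases le_or_gt 1 T with hc | hc
        · have hb1 : (1 + t) ^ (2 * α) ≤ (2 * T) ^ (2 * α) :=
            Real.rpow_le_rpow (by linarith) (by linarith) (by positivity)
          have hb2 : ((2:ℝ) * T) ^ (2 * α) = 2 ^ (2 * α) * T ^ (2 * α) :=
            Real.mul_rpow (by norm_num) hT0.le
          have h2nn : (0:ℝ) ≤ 2 ^ (2*α) * T ^ (2*α) := by positivity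
          calc (1 + t) ^ (2 * α) ≤ 2 ^ (2 * α) * T ^ (2 * α) := by rw [← hb2]; exact hb1
            _ = 2 ^ (2 * α) * 1 * T ^ (2 * α) := by ring
            _ ≤ 2 ^ (2 * α) * K * T ^ (2 * α) := by
                apply mul_le_mul_of_nonneg_right _ (Real.rpow_nonneg hT0.le _)
                apply mul_le_mul_of_nonneg_left hK1 (by positivity)
        · have hb1 : (1 + t) ^ (2 * α) ≤ (2:ℝ) ^ (2 * α) :=
            Real.rpow_le_rpow (by linarith) (by linarith) (by positivity)
          have hb2 : (1:ℝ) ≤ K * T ^ (2 * α) := by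
            have hTK : T ^ (-(2 * α)) ≤ K := le_max_right _ _
            calc (1:ℝ) = T ^ (-(2 * α)) * T ^ (2 * α) := by
                  rw [← Real.rpow_add hT0]; norm_num
              _ ≤ K * T ^ (2 * α) :=
                  mul_le_mul_of_nonneg_right hTK (Real.rpow_nonneg hT0.le _)
          calc (1 + t) ^ (2 * α) ≤ 2 ^ (2 * α) := hb1
            _ = 2 ^ (2 * α) * 1 := (mul_one _).symm
            _ ≤ 2 ^ (2 * α) * (K * T ^ (2 * α)) :=
                mul_le_mul_of_nonneg_left hb2 (by positivity)
            _ = 2 ^ (2 * α) * K * T ^ (2 * α) := by ring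
      have h2 : (1:ℝ) / (t + T) ^ 2 ≤ 1 / T ^ 2 := by
        apply one_div_le_one_div_of_le (by positivity)
        nlinarith
      have htnn := Real.rpow_nonneg ht0.le (1 - 2 * H)
      have h1tnn : (0:ℝ) ≤ (1 + t) ^ (2 * α) := Real.rpow_nonneg (by linarith) _
      calc (1 + t) ^ (2 * α) * t ^ (1 - 2 * H) / (t + T) ^ 2
          = (1 + t) ^ (2 * α) * t ^ (1 - 2 * H) * (1 / (t + T) ^ 2) := by ring
        _ ≤ 2 ^ (2 * α) * K * T ^ (2 * α) * t ^ (1 - 2 * H) * (1 / T ^ 2) := by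
            apply mul_le_mul (mul_le_mul_of_nonneg_right h1 htnn) h2 (by positivity)
            positivity
        _ = 2 ^ (2 * α) * K * T ^ (2 * α) / T ^ 2 * t ^ (1 - 2 * H) := by ring
    calc (∫⁻ t in Ioc (0:ℝ) T,
          ENNReal.ofReal ((1 + t) ^ (2 * α) * t ^ (1 - 2 * H) / (t + T) ^ 2))
        ≤ ∫⁻ t in Ioc (0:ℝ) T,
            ENNReal.ofReal (2 ^ (2 * α) * K * T ^ (2 * α) / T ^ 2 * t ^ (1 - 2 * H)) :=
          setLIntegral_mono' measurableSet_Ioc hb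
      _ = ENNReal.ofReal (2 ^ (2 * α) * K * T ^ (2 * α) / T ^ 2) *
            ∫⁻ t in Ioc (0:ℝ) T, ENNReal.ofReal (t ^ (1 - 2 * H)) := by
          simp_rw [ENNReal.ofReal_mul hcnn]
          exact lintegral_const_mul' _ _ ENNReal.ofReal_ne_top
      _ = _ := by
          rw [hlint1, ← ENNReal.ofReal_mul hcnn]
  -- piece 2 : integral over (T, ∞)
  have hp2 : (∫⁻ t in Ioi T,
        ENNReal.ofReal ((1 + t) ^ (2 * α) * t ^ (1 - 2 * H) / (t + T) ^ 2))
      ≤ ENNReal.ofReal (2 ^ (2 * α) * K * (T ^ (2 * α - 2 * H) / (2 * H - 2 * α))) := by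
    have hcnn : (0:ℝ) ≤ 2 ^ (2 * α) * K := by positivity
    have hb : ∀ t ∈ Ioi T,
        ENNReal.ofReal ((1 + t) ^ (2 * α) * t ^ (1 - 2 * H) / (t + T) ^ 2)
          ≤ ENNReal.ofReal (2 ^ (2 * α) * K * t ^ (2 * α - 1 - 2 * H)) := by
      intro t ht
      have ht0 : (0:ℝ) < t := hT0.trans ht
      apply ENNReal.ofReal_le_ofReal
      have hA : (1 + t) ^ (2 * α) ≤ 2 ^ (2 * α) * K * t ^ (2 * α) := by
        rcases le_or_gt 1 t with hc | hc
        · have hb1 : (1 + t) ^ (2 * α) ≤ (2 * t) ^ (2 * α) :=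
            Real.rpow_le_rpow (by linarith) (by linarith) (by positivity)
          have hb2 : ((2:ℝ) * t) ^ (2 * α) = 2 ^ (2 * α) * t ^ (2 * α) :=
            Real.mul_rpow (by norm_num) ht0.le
          calc (1 + t) ^ (2 * α) ≤ 2 ^ (2 * α) * t ^ (2 * α) := by rw [← hb2]; exact hb1
            _ = 2 ^ (2 * α) * 1 * t ^ (2 * α) := by ring
            _ ≤ 2 ^ (2 * α) * K * t ^ (2 * α) := by
                apply mul_le_mul_of_nonneg_right _ (Real.rpow_nonneg ht0.le _)
                exact mul_le_mul_of_nonneg_left hK1 (by positivity)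
        · have hb1 : (1 + t) ^ (2 * α) ≤ (2:ℝ) ^ (2 * α) :=
            Real.rpow_le_rpow (by linarith) (by linarith) (by positivity)
          have hb2 : (1:ℝ) ≤ K * t ^ (2 * α) := by
            have h1 : t ^ (-(2 * α)) ≤ T ^ (-(2 * α)) :=
              Real.rpow_le_rpow_of_nonpos hT0 ht.le (by linarith)
            have hTK : T ^ (-(2 * α)) ≤ K := le_max_right _ _
            calc (1:ℝ) = t ^ (-(2 * α)) * t ^ (2 * α) := by
                  rw [← Real.rpow_add ht0]; norm_num
              _ ≤ K * t ^ (2 * α) :=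
                  mul_le_mul_of_nonneg_right (h1.trans hTK) (Real.rpow_nonneg ht0.le _)
          calc (1 + t) ^ (2 * α) ≤ 2 ^ (2 * α) := hb1
            _ = 2 ^ (2 * α) * 1 := (mul_one _).symm
            _ ≤ 2 ^ (2 * α) * (K * t ^ (2 * α)) :=
                mul_le_mul_of_nonneg_left hb2 (by positivity)
            _ = 2 ^ (2 * α) * K * t ^ (2 * α) := by ring
      have hB2 : (1:ℝ) / (t + T) ^ 2 ≤ 1 / t ^ 2 := by
        apply one_div_le_one_div_of_le (by positivity)
        nlinarith
      have htnn := Real.rpow_nonneg ht0.le (1 - 2 * H)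
      have hpowid : t ^ (2 * α) * t ^ (1 - 2 * H) / t ^ 2 = t ^ (2 * α - 1 - 2 * H) := by
        rw [← Real.rpow_natCast t 2, ← Real.rpow_add ht0, ← Real.rpow_sub ht0]
        congr 1
        push_cast
        ring
      calc (1 + t) ^ (2 * α) * t ^ (1 - 2 * H) / (t + T) ^ 2
          = (1 + t) ^ (2 * α) * t ^ (1 - 2 * H) * (1 / (t + T) ^ 2) := by ring
        _ ≤ 2 ^ (2 * α) * K * t ^ (2 * α) * t ^ (1 - 2 * H) * (1 / t ^ 2) := by
            apply mul_le_mul (mul_le_mul_of_nonneg_right hA htnn) hB2 (by positivity)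
            positivity
        _ = 2 ^ (2 * α) * K * (t ^ (2 * α) * t ^ (1 - 2 * H) / t ^ 2) := by ring
        _ = 2 ^ (2 * α) * K * t ^ (2 * α - 1 - 2 * H) := by rw [hpowid]
    calc (∫⁻ t in Ioi T,
          ENNReal.ofReal ((1 + t) ^ (2 * α) * t ^ (1 - 2 * H) / (t + T) ^ 2))
        ≤ ∫⁻ t in Ioi T, ENNReal.ofReal (2 ^ (2 * α) * K * t ^ (2 * α - 1 - 2 * H)) :=
          setLIntegral_mono' measurableSet_Ioi hb
      _ = ENNReal.ofReal (2 ^ (2 * α) * K) *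
            ∫⁻ t in Ioi T, ENNReal.ofReal (t ^ (2 * α - 1 - 2 * H)) := by
          simp_rw [ENNReal.ofReal_mul hcnn]
          exact lintegral_const_mul' _ _ ENNReal.ofReal_ne_top
      _ = _ := by
          rw [hlint2, ← ENNReal.ofReal_mul hcnn]
  -- combine the two pieces
  set E : ℝ := 2 ^ (2 * α) * K * T ^ (2 * α) / T ^ 2 * (T ^ (2 - 2 * H) / (2 - 2 * H)) +
      2 ^ (2 * α) * K * (T ^ (2 * α - 2 * H) / (2 * H - 2 * α)) with hEdef
  have step2 : (∫⁻ t in Ioi (0:ℝ),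
        ENNReal.ofReal ((1 + t) ^ (2 * α) * t ^ (1 - 2 * H) / (t + T) ^ 2))
      ≤ ENNReal.ofReal E := by
    rw [show Ioi (0:ℝ) = Ioc 0 T ∪ Ioi T from (Ioc_union_Ioi_eq_Ioi hT0.le).symm,
      lintegral_union measurableSet_Ioi (Ioc_disjoint_Ioi le_rfl), hEdef,
      ENNReal.ofReal_add (by positivity) (by positivity)]
    exact add_le_add hp1 hp2
  -- Cauchy-Schwarz for B
  set Abd : ℝ := min t₁ ((1 + t₁) ^ (1 - 2 * α) / (1 - 2 * α)) with hAbddef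
  have hAbd0 : 0 ≤ Abd := le_min ht₁.le (by positivity)
  have hBeq : ENNReal.ofReal B = ∫⁻ s in Ioc (0:ℝ) t₁, ENNReal.ofReal ‖g₁ s‖ := by
    rw [hBdef, intervalIntegral.integral_of_le ht₁.le]
    exact ofReal_integral_eq_lintegral_ofReal hgi (ae_of_all _ fun s => norm_nonneg _)
  have hCS : (ENNReal.ofReal B) ^ 2 ≤ ENNReal.ofReal Abd * alphaNormSq α g₁ := by
    set F : ℝ → ℝ≥0∞ := fun s => ENNReal.ofReal ((1 + s) ^ (-α)) with hFdef
    set G : ℝ → ℝ≥0∞ := fun s => ENNReal.ofReal ((1 + s) ^ α * ‖g₁ s‖) with hGdef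
    have hFm : AEMeasurable F (volume.restrict (Ioc 0 t₁)) :=
      (by fun_prop : Measurable F).aemeasurable
    have hGm : AEMeasurable G (volume.restrict (Ioc 0 t₁)) := by
      apply ENNReal.measurable_ofReal.comp_aemeasurable
      exact ((by fun_prop : Measurable fun s : ℝ => (1 + s) ^ α).aemeasurable).mul
        (hmem.aestronglyMeasurable.mono_measure
          (Measure.restrict_mono Ioc_subset_Icc_self le_rfl)).norm.aemeasurable
    have hpq : Real.HolderConjugate 2 2 := Real.HolderConjugate.two_two
    have hCS0 := ENNReal.lintegral_mul_le_Lp_mul_Lq (volume.restrict (Ioc (0:ℝ) t₁)) hpq hFm hGm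
    have hsplitFG : ∀ s ∈ Ioc (0:ℝ) t₁, ENNReal.ofReal ‖g₁ s‖ = (F * G) s := by
      intro s hs
      have h1s : (0:ℝ) < 1 + s := by linarith [hs.1]
      simp only [hFdef, hGdef, Pi.mul_apply]
      rw [← ENNReal.ofReal_mul (Real.rpow_nonneg h1s.le _)]
      congr 1
      rw [← mul_assoc, ← Real.rpow_add h1s, neg_add_cancel, Real.rpow_zero, one_mul]
    have hBle : ENNReal.ofReal B ≤
        (∫⁻ s in Ioc (0:ℝ) t₁, F s ^ (2:ℝ)) ^ ((1:ℝ)/2) *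
          (∫⁻ s in Ioc (0:ℝ) t₁, G s ^ (2:ℝ)) ^ ((1:ℝ)/2) := by
      rw [hBeq, setLIntegral_congr_fun measurableSet_Ioc hsplitFG]
      simpa using hCS0
    have hF2 : (∫⁻ s in Ioc (0:ℝ) t₁, F s ^ (2:ℝ)) ≤ ENNReal.ofReal Abd := by
      have heq : ∀ s ∈ Ioc (0:ℝ) t₁, F s ^ (2:ℝ) = ENNReal.ofReal ((1 + s) ^ (-(2 * α))) := by
        intro s hs
        have h1s : (0:ℝ) ≤ 1 + s := by linarith [hs.1]
        simp only [hFdef]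
        rw [ENNReal.ofReal_rpow_of_nonneg (Real.rpow_nonneg h1s _) (by norm_num : (0:ℝ) ≤ 2),
          ← Real.rpow_mul h1s, show -α * 2 = -(2 * α) by ring]
      rw [setLIntegral_congr_fun measurableSet_Ioc heq]
      rcases le_total t₁ ((1 + t₁) ^ (1 - 2 * α) / (1 - 2 * α)) with hm | hm
      · rw [hAbddef, min_eq_left hm]
        calc (∫⁻ s in Ioc (0:ℝ) t₁, ENNReal.ofReal ((1 + s) ^ (-(2 * α))))
            ≤ ∫⁻ _ in Ioc (0:ℝ) t₁, 1 :=
              setLIntegral_mono' measurableSet_Ioc (fun s hs => by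
                rw [← ENNReal.ofReal_one]
                exact ENNReal.ofReal_le_ofReal
                  (Real.rpow_le_one_of_one_le_of_nonpos (by linarith [hs.1]) (by linarith)))
          _ = volume (Ioc (0:ℝ) t₁) := setLIntegral_one _
          _ = ENNReal.ofReal t₁ := by rw [Real.volume_Ioc, sub_zero]
      · rw [hAbddef, min_eq_right hm]
        have hcont : ContinuousOn (fun s : ℝ => (1 + s) ^ (-(2 * α))) (Icc 0 t₁) := by
          apply ContinuousOn.rpow_const
            ((by fun_prop : Continuous fun s : ℝ => 1 + s).continuousOn)
          intro s hs
          exact Or.inl (ne_of_gt (by linarith [hs.1] : (0:ℝ) < 1 + s))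
        have hint2 : IntegrableOn (fun s : ℝ => (1 + s) ^ (-(2 * α))) (Ioc 0 t₁) volume :=
          hcont.integrableOn_Icc.mono_set Ioc_subset_Icc_self
        rw [← ofReal_integral_eq_lintegral_ofReal hint2
          ((ae_restrict_iff' measurableSet_Ioc).2 (ae_of_all _ fun s hs =>
            Real.rpow_nonneg (by linarith [hs.1]) _))]
        apply ENNReal.ofReal_le_ofReal
        rw [← intervalIntegral.integral_of_le ht₁.le]
        have hch : (∫ s in (0:ℝ)..t₁, (1 + s) ^ (-(2 * α)))
            = ∫ u in (1:ℝ)..(1 + t₁), u ^ (-(2 * α)) := by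
          have := intervalIntegral.integral_comp_add_left (a := (0:ℝ)) (b := t₁)
            (fun u : ℝ => u ^ (-(2 * α))) 1
          simpa using this
        rw [hch, integral_rpow (Or.inl (by linarith : (-1:ℝ) < -(2 * α))), Real.one_rpow,
          show -(2 * α) + 1 = 1 - 2 * α by ring, sub_div]
        have h6 : (0:ℝ) ≤ 1 / (1 - 2 * α) := by positivity
        linarith
    have hG2 : (∫⁻ s in Ioc (0:ℝ) t₁, G s ^ (2:ℝ)) ≤ alphaNormSq α g₁ := by
      have heq : ∀ s ∈ Ioc (0:ℝ) t₁, G s ^ (2:ℝ)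
          = ENNReal.ofReal ((1 + s) ^ (2 * α) * ‖g₁ s‖ ^ 2) := by
        intro s hs
        have h1s : (0:ℝ) ≤ 1 + s := by linarith [hs.1]
        simp only [hGdef]
        rw [ENNReal.ofReal_rpow_of_nonneg
          (mul_nonneg (Real.rpow_nonneg h1s _) (norm_nonneg _)) (by norm_num : (0:ℝ) ≤ 2)]
        congr 1
        rw [Real.mul_rpow (Real.rpow_nonneg h1s _) (norm_nonneg _), ← Real.rpow_mul h1s,
          show α * 2 = 2 * α by ring]
        congr 1
        rw [show (2:ℝ) = ((2:ℕ):ℝ) by norm_num, Real.rpow_natCast]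
      rw [setLIntegral_congr_fun measurableSet_Ioc heq]
      exact lintegral_mono_set Ioc_subset_Ioi_self
    calc (ENNReal.ofReal B) ^ 2
        ≤ ((∫⁻ s in Ioc (0:ℝ) t₁, F s ^ (2:ℝ)) ^ ((1:ℝ)/2) *
            (∫⁻ s in Ioc (0:ℝ) t₁, G s ^ (2:ℝ)) ^ ((1:ℝ)/2)) ^ 2 := pow_le_pow_left' hBle 2
      _ = (∫⁻ s in Ioc (0:ℝ) t₁, F s ^ (2:ℝ)) * (∫⁻ s in Ioc (0:ℝ) t₁, G s ^ (2:ℝ)) := by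
          rw [mul_pow,
            ← ENNReal.rpow_natCast ((∫⁻ s in Ioc (0:ℝ) t₁, F s ^ (2:ℝ)) ^ ((1:ℝ)/2)) 2,
            ← ENNReal.rpow_natCast ((∫⁻ s in Ioc (0:ℝ) t₁, G s ^ (2:ℝ)) ^ ((1:ℝ)/2)) 2,
            ← ENNReal.rpow_mul, ← ENNReal.rpow_mul]
          norm_num
      _ ≤ ENNReal.ofReal Abd * alphaNormSq α g₁ := mul_le_mul' hF2 hG2
  -- the key real inequality
  have g1 : T ^ (2 * H - 1) * (T ^ (2 * α) * T ^ (2 - 2 * H) / T ^ 2) = T ^ (2 * α - 1) := by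
    rw [← Real.rpow_natCast T 2, ← Real.rpow_add hT0, ← Real.rpow_sub hT0, ← Real.rpow_add hT0]
    congr 1
    push_cast
    ring
  have g2 : T ^ (2 * H - 1) * T ^ (2 * α - 2 * H) = T ^ (2 * α - 1) := by
    rw [← Real.rpow_add hT0]
    congr 1
    ring
  have e3 : (t₂ / t₁) ^ (2 * α - 1) = 2 ^ (2 * α - 1) * T ^ (2 * α - 1) * t₁ ^ (1 - 2 * α) := by
    have h : t₂ / t₁ = 2 * T / t₁ := by rw [hTdef]; ring
    rw [h, Real.div_rpow (by positivity) ht₁.le, Real.mul_rpow (by norm_num) hT0.le,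
      div_eq_mul_inv, ← Real.rpow_neg ht₁.le, show -(2 * α - 1) = 1 - 2 * α by ring]
  have e4 : (2:ℝ) ^ (2 * α) = 2 * 2 ^ (2 * α - 1) := by
    have h := Real.rpow_add two_pos 1 (2 * α - 1)
    rw [show (1:ℝ) + (2 * α - 1) = 2 * α by ring, Real.rpow_one] at h
    exact h
  have key : K * Abd ≤ c₂ * t₁ ^ (1 - 2 * α) := by
    rcases le_or_gt t₁ 1 with h1 | h1
    · have hK' : K ≤ t₁ ^ (-(2 * α)) := by
        apply max_le
        · exact Real.one_le_rpow_of_pos_of_le_one_of_nonpos ht₁ h1 (by linarith)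
        · exact Real.rpow_le_rpow_of_nonpos ht₁ ht₁T.le (by linarith)
      have h2 : K * Abd ≤ t₁ ^ (-(2 * α)) * t₁ :=
        mul_le_mul hK' (min_le_left _ _) hAbd0 (Real.rpow_nonneg ht₁.le _)
      have h3 : t₁ ^ (-(2 * α)) * t₁ = t₁ ^ (1 - 2 * α) := by
        rw [show (1 - 2 * α) = -(2 * α) + 1 by ring, Real.rpow_add ht₁, Real.rpow_one]
      have h4 : t₁ ^ (1 - 2 * α) ≤ c₂ * t₁ ^ (1 - 2 * α) := by
        nlinarith [Real.rpow_nonneg ht₁.le (1 - 2 * α)]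
      calc K * Abd ≤ t₁ ^ (-(2 * α)) * t₁ := h2
        _ = t₁ ^ (1 - 2 * α) := h3
        _ ≤ c₂ * t₁ ^ (1 - 2 * α) := h4
    · have hT1 : (1:ℝ) < T := lt_trans h1 ht₁T
      have hKeq : K = 1 :=
        max_eq_left (Real.rpow_le_one_of_one_le_of_nonpos hT1.le (by linarith))
      rw [hKeq, one_mul]
      calc Abd ≤ (1 + t₁) ^ (1 - 2 * α) / (1 - 2 * α) := min_le_right _ _
        _ ≤ (2 * t₁) ^ (1 - 2 * α) / (1 - 2 * α) := by
            gcongr <;> linarith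
        _ = 2 ^ (1 - 2 * α) * t₁ ^ (1 - 2 * α) / (1 - 2 * α) := by
            rw [Real.mul_rpow (by norm_num) ht₁.le]
        _ ≤ c₂ * t₁ ^ (1 - 2 * α) := by
            rw [hc₂def,
              show 2 ^ (1 - 2 * α) * t₁ ^ (1 - 2 * α) / (1 - 2 * α)
                  = (2 ^ (1 - 2 * α) / (1 - 2 * α)) * t₁ ^ (1 - 2 * α) by ring,
              add_mul, one_mul]
            linarith [Real.rpow_nonneg ht₁.le (1 - 2 * α)]
  have finalReal : 4 * T ^ (2 * H - 1) * Abd * E ≤ κ ^ 2 * (t₂ / t₁) ^ (2 * α - 1) := by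
    have expand : 4 * T ^ (2 * H - 1) * Abd * E
        = 4 * 2 ^ (2 * α) * C₁ * T ^ (2 * α - 1) * (K * Abd) := by
      have lhs1 : 4 * T ^ (2 * H - 1) * Abd * E
          = 4 * Abd * 2 ^ (2 * α) * K *
              ((T ^ (2 * H - 1) * (T ^ (2 * α) * T ^ (2 - 2 * H) / T ^ 2)) * (1 / (2 - 2 * H))
                + (T ^ (2 * H - 1) * T ^ (2 * α - 2 * H)) * (1 / (2 * H - 2 * α))) := by
        rw [hEdef]; ring
      rw [lhs1, g1, g2, hC₁def]; ring
    have hmul := mul_le_mul_of_nonneg_left key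
      (show (0:ℝ) ≤ 4 * 2 ^ (2 * α) * C₁ * T ^ (2 * α - 1) by positivity)
    calc 4 * T ^ (2 * H - 1) * Abd * E
        = 4 * 2 ^ (2 * α) * C₁ * T ^ (2 * α - 1) * (K * Abd) := expand
      _ ≤ 4 * 2 ^ (2 * α) * C₁ * T ^ (2 * α - 1) * (c₂ * t₁ ^ (1 - 2 * α)) := hmul
      _ = κ ^ 2 * (t₂ / t₁) ^ (2 * α - 1) := by rw [hκ2, e3, e4]; ring
  -- assemble
  have main : alphaNormSq α f2
      ≤ ENNReal.ofReal (κ ^ 2 * (t₂ / t₁) ^ (2 * α - 1)) * alphaNormSq α g₁ := by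
    calc alphaNormSq α f2
        ≤ ENNReal.ofReal (4 * T ^ (2 * H - 1) * B ^ 2) *
            ∫⁻ t in Ioi (0:ℝ),
              ENNReal.ofReal ((1 + t) ^ (2 * α) * t ^ (1 - 2 * H) / (t + T) ^ 2) := step1
      _ ≤ ENNReal.ofReal (4 * T ^ (2 * H - 1) * B ^ 2) * ENNReal.ofReal E :=
          mul_le_mul_right step2 _
      _ = ENNReal.ofReal (4 * T ^ (2 * H - 1)) * (ENNReal.ofReal B) ^ 2 * ENNReal.ofReal E := by
          rw [ENNReal.ofReal_mul (by positivity : (0:ℝ) ≤ 4 * T ^ (2 * H - 1)),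
            ENNReal.ofReal_pow hB0]
      _ ≤ ENNReal.ofReal (4 * T ^ (2 * H - 1)) * (ENNReal.ofReal Abd * alphaNormSq α g₁) *
            ENNReal.ofReal E := mul_le_mul_left (mul_le_mul_right hCS _) _
      _ = ENNReal.ofReal (4 * T ^ (2 * H - 1)) * ENNReal.ofReal Abd * ENNReal.ofReal E *
            alphaNormSq α g₁ := by ring
      _ = ENNReal.ofReal (4 * T ^ (2 * H - 1) * Abd * E) * alphaNormSq α g₁ := by
          rw [← ENNReal.ofReal_mul (by positivity : (0:ℝ) ≤ 4 * T ^ (2 * H - 1)),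
            ← ENNReal.ofReal_mul
              (mul_nonneg (by positivity : (0:ℝ) ≤ 4 * T ^ (2 * H - 1)) hAbd0)]
      _ ≤ ENNReal.ofReal (κ ^ 2 * (t₂ / t₁) ^ (2 * α - 1)) * alphaNormSq α g₁ :=
          mul_le_mul_left (ENNReal.ofReal_le_ofReal finalReal) _
  have hfin := ENNReal.rpow_le_rpow main (by norm_num : (0:ℝ) ≤ 1/2)
  rw [ENNReal.mul_rpow_of_nonneg _ _ (by norm_num : (0:ℝ) ≤ 1/2)] at hfin
  have hXnn : (0:ℝ) ≤ κ ^ 2 * (t₂ / t₁) ^ (2 * α - 1) := by positivity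
  rw [ENNReal.ofReal_rpow_of_nonneg hXnn (by norm_num : (0:ℝ) ≤ 1/2)] at hfin
  have hdiv : (0:ℝ) < t₂ / t₁ := by positivity
  have hXeq : (κ ^ 2 * (t₂ / t₁) ^ (2 * α - 1)) ^ ((1:ℝ)/2) = κ * (t₂ / t₁) ^ (α - 1/2) := by
    rw [Real.mul_rpow (sq_nonneg κ) (Real.rpow_nonneg hdiv.le _),
      ← Real.rpow_natCast κ 2, ← Real.rpow_mul hκ0, ← Real.rpow_mul hdiv.le]
    norm_num
    exact Or.inl (by rw [show (2 * α - 1) * (1 / 2) = α - 1 / 2 by ring])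
  rw [hXeq] at hfin
  exact hfin
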